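/- arXiv:2312.05954 — 5 statements merged into one kernel-verified Lean document; each statement's English description precedes it below -/
import Mathlib

section
/- Let 𝒜 be an abelian category in which every object has finite length, and let P₁, P₂ be projective objects of 𝒜 such that: (1) no simple object is a subquotient of both P₁ and P₂; (2) every simple object of 𝒜 is a subquotient of P₁ or of P₂; (3) for each i and each simple subquotient S of Pᵢ there is an epimorphism Pᵢ → S. Then every object X of 𝒜 decomposes canonically as X ≅ X₁ ⊕ X₂, where all simple subquotients of Xᵢ are subquotients of Pᵢ, and Hom(X₁, X₂) = Hom(X₂, X₁) = 0. -/
open CategoryTheory CategoryTheory.Limits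

universe v u

/-- `S` is a simple subquotient of `X`: `S` is simple and is a quotient of a subobject of
`X` (equivalently, there is an object `Y` with a mono `Y ⟶ X` and an epi `Y ⟶ S`). -/
def IsSimpleSubquotient {𝒜 : Type u} [Category.{v} 𝒜] [Abelian 𝒜] (S X : 𝒜) : Prop :=
  Simple S ∧ ∃ (Y : 𝒜) (i : Y ⟶ X) (p : Y ⟶ S), Mono i ∧ Epi p

/-- `X` has finite length: it admits a composition series, i.e. a finite chain of subobjects
from `⊥` to `⊤` with simple successive quotients. -/
def HasFiniteLength {𝒜 : Type u} [Category.{v} 𝒜] [Abelian 𝒜] (X : 𝒜) : Prop :=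
  ∃ (n : ℕ) (c : Fin (n + 1) → Subobject X) (hc : Monotone c),
    c 0 = ⊥ ∧ c (Fin.last n) = ⊤ ∧
    ∀ i : Fin n, Simple (cokernel (Subobject.ofLE (c i.castSucc) (c i.succ)
      (hc (Fin.castSucc_lt_succ (i := i)).le)))

section Aux

attribute [local instance] CategoryTheory.Abelian.Pseudoelement.objectToSort
  CategoryTheory.Abelian.Pseudoelement.homToFun



variable {𝒜 : Type u} [Category.{v} 𝒜] [Abelian 𝒜]

theorem subq_of_mono {T A X : 𝒜} (i : A ⟶ X) (hi : Mono i) (h : IsSimpleSubquotient T A) :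
    IsSimpleSubquotient T X := by
  obtain ⟨hT, Y, j, p, hj, hp⟩ := h
  exact ⟨hT, Y, j ≫ i, p, by haveI := hj; exact mono_comp _ _, hp⟩

theorem subq_of_epi {T X Q : 𝒜} (p : X ⟶ Q) (hp : Epi p) (h : IsSimpleSubquotient T Q) :
    IsSimpleSubquotient T X := by
  obtain ⟨hT, Y, j, q, hj, hq⟩ := h
  haveI := hp; haveI := hj; haveI := hq
  refine ⟨hT, pullback p j, pullback.fst p j, pullback.snd p j ≫ q, inferInstance, epi_comp _ _⟩

theorem subq_congr {T S X : 𝒜} (e : T ≅ S) (hT : Simple T) (h : IsSimpleSubquotient S X) :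
    IsSimpleSubquotient T X := by
  obtain ⟨hS, Y, i, p, hi, hp⟩ := h
  haveI := hp
  exact ⟨hT, Y, i, p ≫ e.inv, hi, epi_comp _ _⟩

theorem isZero_of_no_simple_subq {K : 𝒜} (hK : HasFiniteLength K)
    (h : ∀ T : 𝒜, ¬ IsSimpleSubquotient T K) : IsZero K := by
  obtain ⟨n, c, hc, h0, hlast, hsimple⟩ := hK
  cases n with
  | zero =>
      have hbt : (⊤ : Subobject K) = ⊥ := by rw [← h0, ← hlast]; rfl
      have h1 : IsZero ((⊥ : Subobject K) : 𝒜) :=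
        (isZero_zero 𝒜).of_iso Subobject.botCoeIsoZero
      rw [← hbt] at h1
      exact h1.of_iso (asIso (⊤ : Subobject K).arrow).symm
  | succ m =>
      exact absurd ⟨hsimple 0, _, (c (0 : Fin (m + 1)).succ).arrow, cokernel.π _,
        inferInstance, inferInstance⟩ (h _)

theorem no_subq_of_isZero {X T : 𝒜} (hX : IsZero X) (hT : IsSimpleSubquotient T X) : False := by
  obtain ⟨hTs, Y, i, p, hi, hp⟩ := hT
  haveI := hi; haveI := hp
  have hY : IsZero Y := by
    rw [IsZero.iff_id_eq_zero]
    exact (cancel_mono i).1 (by rw [hX.eq_of_tgt (𝟙 Y ≫ i) (0 ≫ i)])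
  have hTz : IsZero T := by
    rw [IsZero.iff_id_eq_zero]
    exact (cancel_epi p).1 (by rw [hY.eq_of_src (p ≫ 𝟙 T) (p ≫ 0)])
  haveI := hTs
  exact Simple.not_isZero T hTz

theorem hom_zero_of_classes {P P' X X' : 𝒜}
    (hlen : ∀ Y : 𝒜, HasFiniteLength Y)
    (hdisj : ∀ S : 𝒜, Simple S → ¬(IsSimpleSubquotient S P ∧ IsSimpleSubquotient S P'))
    (hX : ∀ T, IsSimpleSubquotient T X → IsSimpleSubquotient T P)
    (hX' : ∀ T, IsSimpleSubquotient T X' → IsSimpleSubquotient T P')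
    (f : X ⟶ X') : f = 0 := by
  have himz : IsZero (image f) := by
    apply isZero_of_no_simple_subq (hlen _)
    intro T hT
    have h1 : IsSimpleSubquotient T X := subq_of_epi (factorThruImage f) inferInstance hT
    have h2 : IsSimpleSubquotient T X' := subq_of_mono (image.ι f) inferInstance hT
    exact hdisj T hT.1 ⟨hX T h1, hX' T h2⟩
  rw [← image.fac f, himz.eq_of_src (image.ι f) 0, comp_zero]

theorem subq_iso_of_subq_simple {T S : 𝒜} (hS : Simple S) (h : IsSimpleSubquotient T S) :
    Nonempty (T ≅ S) := by
  obtain ⟨hT, Y, i, p, hi, hp⟩ := h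
  haveI := hS; haveI := hT; haveI := hi; haveI := hp
  have hine : i ≠ 0 := by
    intro h0
    have hY : IsZero Y := by
      rw [IsZero.iff_id_eq_zero]
      exact (cancel_mono i).1 (by simp [h0])
    have hTz : IsZero T := by
      rw [IsZero.iff_id_eq_zero]
      exact (cancel_epi p).1 (by rw [hY.eq_of_src (p ≫ 𝟙 T) (p ≫ 0)])
    exact Simple.not_isZero T hTz
  haveI : Epi i := epi_of_nonzero_to_simple hine
  haveI : IsIso i := isIso_of_mono_of_epi i
  haveI : Simple Y := Simple.of_iso (asIso i)
  have hpne : p ≠ 0 := by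
    intro h0
    refine Simple.not_isZero T ?_
    rw [IsZero.iff_id_eq_zero]
    exact (cancel_epi p).1 (by simp [h0])
  haveI : IsIso p := isIso_of_epi_of_nonzero hpne
  exact ⟨(asIso p).symm ≪≫ asIso i⟩

theorem pseudo_exact_cokernel {A X : 𝒜} (f : A ⟶ X) :
    ∀ b : X, (cokernel.π f) b = 0 → ∃ a : A, f a = b := by
  have hex : (ShortComplex.mk f (cokernel.π f) (cokernel.condition f)).Exact :=
    ShortComplex.exact_of_g_is_cokernel _ (cokernelIsCokernel f)
  exact fun b hb => Abelian.Pseudoelement.pseudo_exact_of_exact hex b hb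

theorem subq_ext {A X T : 𝒜} (i : A ⟶ X) (hi : Mono i) (h : IsSimpleSubquotient T X) :
    IsSimpleSubquotient T A ∨ IsSimpleSubquotient T (cokernel i) := by
  obtain ⟨hT, Y, yi, p, hyi, hp⟩ := h
  haveI := hT; haveI := hi; haveI := hyi; haveI := hp
  by_cases hφ : pullback.fst yi i ≫ p = 0
  · right
    set p' := cokernel.desc (pullback.fst yi i) p hφ with hp'def
    have hfac : cokernel.π _ ≫ p' = p := cokernel.π_desc _ _ _
    haveI : Epi p' := by
      haveI : Epi (cokernel.π (pullback.fst yi i) ≫ p') := by rw [hfac]; infer_instance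
      exact epi_of_epi (cokernel.π (pullback.fst yi i)) p'
    have hw : pullback.fst yi i ≫ yi ≫ cokernel.π i = 0 := by
      rw [← Category.assoc, pullback.condition, Category.assoc, cokernel.condition, comp_zero]
    set ψ := cokernel.desc (pullback.fst yi i) (yi ≫ cokernel.π i) hw with hψdef
    have hψ : Mono ψ := by
      apply Abelian.Pseudoelement.mono_of_zero_of_map_zero
      intro z hz
      obtain ⟨y, hy⟩ := Abelian.Pseudoelement.pseudo_surjective_of_epi
        (cokernel.π (pullback.fst yi i)) z
      have h0 : (cokernel.π i) (yi y) = 0 := by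
        have h1 : (cokernel.π (pullback.fst yi i) ≫ ψ) y = 0 := by
          rw [Abelian.Pseudoelement.comp_apply, hy, hz]
        rw [cokernel.π_desc] at h1
        rwa [← Abelian.Pseudoelement.comp_apply]
      obtain ⟨a, ha⟩ := pseudo_exact_cokernel i _ h0
      obtain ⟨s, hs1, hs2⟩ := Abelian.Pseudoelement.pseudo_pullback (f := yi) (g := i)
        (p := y) (q := a) (by rw [ha])
      rw [← hy, ← hs1, ← Abelian.Pseudoelement.comp_apply, cokernel.condition]
      exact Abelian.Pseudoelement.zero_apply _ _
    exact ⟨hT, cokernel (pullback.fst yi i), ψ, p', hψ, inferInstance⟩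
  · left
    haveI : Epi (pullback.fst yi i ≫ p) := epi_of_nonzero_to_simple hφ
    exact ⟨hT, pullback yi i, pullback.snd yi i, pullback.fst yi i ≫ p,
      inferInstance, inferInstance⟩

theorem exists_section {P' W S : 𝒜} (hlen : ∀ Y : 𝒜, HasFiniteLength Y)
    (hproj : Projective P') (q : W ⟶ S) (hq : Epi q) (hS : Simple S)
    (π : P' ⟶ S) (hπ : Epi π)
    (hker : ∀ T : 𝒜, IsSimpleSubquotient T (kernel q) → IsSimpleSubquotient T P' → False) :
    ∃ s : S ⟶ W, s ≫ q = 𝟙 S := by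
  haveI := hq; haveI := hπ
  obtain ⟨t, ht⟩ := hproj.factors π q
  set m := image.ι t with hm
  have hmq_epi : Epi (m ≫ q) := by
    have hfac : factorThruImage t ≫ (m ≫ q) = π := by
      rw [← Category.assoc, image.fac, ht]
    haveI : Epi (factorThruImage t ≫ (m ≫ q)) := by rw [hfac]; exact hπ
    exact epi_of_epi (factorThruImage t) _
  have hcomp : (kernel.ι (m ≫ q) ≫ m) ≫ q = 0 := by
    rw [Category.assoc, kernel.condition]
  have hKzero : IsZero (kernel (m ≫ q)) := by
    apply isZero_of_no_simple_subq (hlen _)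
    intro T hT
    have h2 : IsSimpleSubquotient T P' :=
      subq_of_epi (factorThruImage t) inferInstance
        (subq_of_mono (kernel.ι (m ≫ q)) inferInstance hT)
    have h1 : IsSimpleSubquotient T (kernel q) := by
      refine subq_of_mono (kernel.lift q (kernel.ι (m ≫ q) ≫ m) hcomp) ?_ hT
      haveI : Mono (kernel.lift q (kernel.ι (m ≫ q) ≫ m) hcomp ≫ kernel.ι q) := by
        rw [kernel.lift_ι]; exact mono_comp _ _
      exact mono_of_mono _ (kernel.ι q)
    exact hker T h1 h2
  haveI : Mono (m ≫ q) := Preadditive.mono_of_isZero_kernel _ hKzero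
  haveI : IsIso (m ≫ q) := isIso_of_mono_of_epi _
  exact ⟨inv (m ≫ q) ≫ m, by rw [Category.assoc, IsIso.inv_hom_id]⟩


theorem step {P P' : 𝒜} (hlen : ∀ Y : 𝒜, HasFiniteLength Y)
    (hproj' : Projective P')
    (hdisj : ∀ S : 𝒜, Simple S → ¬(IsSimpleSubquotient S P ∧ IsSimpleSubquotient S P'))
    (hsurj' : ∀ S : 𝒜, IsSimpleSubquotient S P' → ∃ f : P' ⟶ S, Epi f)
    {X A A₁ A₂ : 𝒜} (f : A ⟶ X) (hf : Mono f)
    (hSsimple : Simple (cokernel f)) (hSP' : IsSimpleSubquotient (cokernel f) P')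
    (e : A ≅ A₁ ⊞ A₂)
    (hA₁ : ∀ T, IsSimpleSubquotient T A₁ → IsSimpleSubquotient T P)
    (hA₂ : ∀ T, IsSimpleSubquotient T A₂ → IsSimpleSubquotient T P') :
    ∃ (X₂ : 𝒜) (_ : X ≅ A₁ ⊞ X₂),
      ∀ T, IsSimpleSubquotient T X₂ → IsSimpleSubquotient T P' := by
  haveI := hf
  set g₁ : A₁ ⟶ X := biprod.inl ≫ e.inv ≫ f with hg₁def
  set g₂ : A₂ ⟶ X := biprod.inr ≫ e.inv ≫ f with hg₂def
  haveI : Mono g₁ := by rw [hg₁def]; exact mono_comp _ _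
  haveI : Mono g₂ := by rw [hg₂def]; exact mono_comp _ _
  set p₁ : A ⟶ A₁ := e.hom ≫ biprod.fst with hp₁def
  set p₂ : A ⟶ A₂ := e.hom ≫ biprod.snd with hp₂def
  have hf_decomp : p₁ ≫ g₁ + p₂ ≫ g₂ = f := by
    rw [hp₁def, hp₂def, hg₁def, hg₂def]
    simp only [Category.assoc]
    calc e.hom ≫ biprod.fst ≫ biprod.inl ≫ e.inv ≫ f
          + e.hom ≫ biprod.snd ≫ biprod.inr ≫ e.inv ≫ f
        = e.hom ≫ (biprod.fst ≫ biprod.inl + biprod.snd ≫ biprod.inr) ≫ e.inv ≫ f := by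
          simp only [Preadditive.comp_add, Preadditive.add_comp, Category.assoc]
      _ = f := by rw [biprod.total]; simp
  -- the quotient by A₂
  set cW : X ⟶ cokernel g₂ := cokernel.π g₂ with hcWdef
  have hg₂πf : g₂ ≫ cokernel.π f = 0 := by
    rw [hg₂def, Category.assoc, Category.assoc, cokernel.condition, comp_zero, comp_zero]
  have hg₁πf : g₁ ≫ cokernel.π f = 0 := by
    rw [hg₁def, Category.assoc, Category.assoc, cokernel.condition, comp_zero, comp_zero]
  set q : cokernel g₂ ⟶ cokernel f := cokernel.desc g₂ (cokernel.π f) hg₂πf with hqdef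
  have hcWq : cW ≫ q = cokernel.π f := by rw [hcWdef, hqdef, cokernel.π_desc]
  haveI hq_epi : Epi q := by
    haveI : Epi (cW ≫ q) := by rw [hcWq]; infer_instance
    exact epi_of_epi cW q
  have hg₁w : g₁ ≫ cW ≫ q = 0 := by rw [hcWq, hg₁πf]
  have hg₁w' : (g₁ ≫ cW) ≫ q = 0 := by rw [Category.assoc, hg₁w]
  set k₁ : A₁ ⟶ kernel q := kernel.lift q (g₁ ≫ cW) hg₁w' with hk₁def
  have hk₁ι : k₁ ≫ kernel.ι q = g₁ ≫ cW := by rw [hk₁def, kernel.lift_ι]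
  -- the morphism identity f ≫ cW = p₁ ≫ g₁ ≫ cW
  have hfcW : f ≫ cW = p₁ ≫ g₁ ≫ cW := by
    rw [← hf_decomp]
    simp only [hcWdef, Preadditive.add_comp, Category.assoc, cokernel.condition, comp_zero,
      add_zero]
  haveI hk₁_mono : Mono k₁ := by
    haveI : Mono (g₁ ≫ cW) := by
      apply Abelian.Pseudoelement.mono_of_zero_of_map_zero
      intro a ha
      have h0 : cW (g₁ a) = 0 := by rwa [← Abelian.Pseudoelement.comp_apply]
      obtain ⟨b, hb⟩ := pseudo_exact_cokernel g₂ _ h0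
      -- g₂ b = g₁ a
      have hfe : f ((e.inv) ((biprod.inr : A₂ ⟶ A₁ ⊞ A₂) b))
          = f ((e.inv) ((biprod.inl : A₁ ⟶ A₁ ⊞ A₂) a)) := by
        have h1 : (biprod.inr ≫ e.inv ≫ f) b = (biprod.inl ≫ e.inv ≫ f) a := by
          rw [← hg₂def, ← hg₁def, hb]
        simpa only [Abelian.Pseudoelement.comp_apply] using h1
      have h2 := Abelian.Pseudoelement.pseudo_injective_of_mono f hfe
      have h3 := Abelian.Pseudoelement.pseudo_injective_of_mono e.inv h2
      -- apply biprod.fst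
      have h4 : (biprod.fst : A₁ ⊞ A₂ ⟶ A₁) ((biprod.inr : A₂ ⟶ A₁ ⊞ A₂) b)
          = (biprod.fst : A₁ ⊞ A₂ ⟶ A₁) ((biprod.inl : A₁ ⟶ A₁ ⊞ A₂) a) := by rw [h3]
      rw [← Abelian.Pseudoelement.comp_apply, ← Abelian.Pseudoelement.comp_apply,
        biprod.inr_fst, biprod.inl_fst] at h4
      have h5 : (𝟙 A₁) a = 0 := by
        rw [← h4]; exact Abelian.Pseudoelement.zero_apply _ _
      exact Abelian.Pseudoelement.zero_of_map_zero _
        (Abelian.Pseudoelement.pseudo_injective_of_mono (𝟙 A₁)) a h5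
    haveI : Mono (k₁ ≫ kernel.ι q) := by rw [hk₁ι]; infer_instance
    exact mono_of_mono k₁ (kernel.ι q)
  haveI hk₁_epi : Epi k₁ := by
    apply Abelian.Pseudoelement.epi_of_pseudo_surjective
    intro w
    obtain ⟨x, hx⟩ := Abelian.Pseudoelement.pseudo_surjective_of_epi cW ((kernel.ι q) w)
    have hqw : q ((kernel.ι q) w) = 0 := by
      rw [← Abelian.Pseudoelement.comp_apply, kernel.condition]
      exact Abelian.Pseudoelement.zero_apply _ _
    have hx0 : (cokernel.π f) x = 0 := by
      rw [← hcWq, Abelian.Pseudoelement.comp_apply, hx, hqw]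
    obtain ⟨a, ha⟩ := pseudo_exact_cokernel f x hx0
    refine ⟨p₁ a, Abelian.Pseudoelement.pseudo_injective_of_mono (kernel.ι q) ?_⟩
    rw [← Abelian.Pseudoelement.comp_apply, hk₁ι]
    have : (g₁ ≫ cW) (p₁ a) = (p₁ ≫ g₁ ≫ cW) a := by
      rw [Abelian.Pseudoelement.comp_apply (p₁) (g₁ ≫ cW)]
    rw [this, ← hfcW, Abelian.Pseudoelement.comp_apply, ha, hx]
  haveI : IsIso k₁ := isIso_of_mono_of_epi k₁
  -- the section of q
  obtain ⟨π', hπ'⟩ := hsurj' (cokernel f) hSP'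
  obtain ⟨s, hs⟩ := exists_section hlen hproj' q hq_epi hSsimple π' hπ' (by
    intro T hTker hTP'
    have hTA₁ : IsSimpleSubquotient T A₁ :=
      subq_of_mono (asIso k₁).inv inferInstance hTker
    exact hdisj T hTker.1 ⟨hA₁ T hTA₁, hTP'⟩)
  -- build the retraction of g₁
  have hρw : (𝟙 (cokernel g₂) - q ≫ s) ≫ q = 0 := by
    simp only [Preadditive.sub_comp, Category.id_comp, Category.assoc, hs,
      Category.comp_id, sub_self]
  set ρ₁ : cokernel g₂ ⟶ kernel q := kernel.lift q (𝟙 (cokernel g₂) - q ≫ s) hρw with hρ₁def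
  have hιρ₁ : kernel.ι q ≫ ρ₁ = 𝟙 (kernel q) := by
    rw [← cancel_mono (kernel.ι q)]
    rw [Category.assoc, hρ₁def, kernel.lift_ι]
    simp only [Preadditive.comp_sub, Category.comp_id, Category.id_comp]
    rw [← Category.assoc, kernel.condition, zero_comp, sub_zero]
  set r : X ⟶ A₁ := cW ≫ ρ₁ ≫ inv k₁ with hrdef
  have hret : g₁ ≫ r = 𝟙 A₁ := by
    rw [hrdef, ← Category.assoc, ← Category.assoc]
    rw [show (g₁ ≫ cW) = k₁ ≫ kernel.ι q from hk₁ι.symm]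
    rw [Category.assoc, Category.assoc, ← Category.assoc (kernel.ι q) ρ₁ (inv k₁), hιρ₁,
      Category.id_comp, IsIso.hom_inv_id]
  haveI : IsSplitMono g₁ := IsSplitMono.mk' ⟨r, hret⟩
  -- the decomposition
  have hbilim := isBilimitBinaryBiconeOfIsSplitMonoOfCokernel (cokernelIsCokernel g₁)
  refine ⟨cokernel g₁, biprod.uniqueUpToIso _ _ hbilim, ?_⟩
  -- class condition for cokernel g₁
  intro T hT
  set h : A₂ ⟶ cokernel g₁ := g₂ ≫ cokernel.π g₁ with hhdef
  haveI hh_mono : Mono h := by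
    apply Abelian.Pseudoelement.mono_of_zero_of_map_zero
    intro a ha
    have h0 : (cokernel.π g₁) (g₂ a) = 0 := by
      rw [← Abelian.Pseudoelement.comp_apply, ← hhdef, ha]
    obtain ⟨b, hb⟩ := pseudo_exact_cokernel g₁ _ h0
    have hfe : f ((e.inv) ((biprod.inl : A₁ ⟶ A₁ ⊞ A₂) b))
        = f ((e.inv) ((biprod.inr : A₂ ⟶ A₁ ⊞ A₂) a)) := by
      have h1 : (biprod.inl ≫ e.inv ≫ f) b = (biprod.inr ≫ e.inv ≫ f) a := by
        rw [← hg₂def, ← hg₁def, hb]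
      simpa only [Abelian.Pseudoelement.comp_apply] using h1
    have h2 := Abelian.Pseudoelement.pseudo_injective_of_mono f hfe
    have h3 := Abelian.Pseudoelement.pseudo_injective_of_mono e.inv h2
    have h4 : (biprod.snd : A₁ ⊞ A₂ ⟶ A₂) ((biprod.inl : A₁ ⟶ A₁ ⊞ A₂) b)
        = (biprod.snd : A₁ ⊞ A₂ ⟶ A₂) ((biprod.inr : A₂ ⟶ A₁ ⊞ A₂) a) := by rw [h3]
    rw [← Abelian.Pseudoelement.comp_apply, ← Abelian.Pseudoelement.comp_apply,
      biprod.inl_snd, biprod.inr_snd] at h4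
    have h5 : (𝟙 A₂) a = 0 := by
      rw [← h4]; exact Abelian.Pseudoelement.zero_apply _ _
    exact Abelian.Pseudoelement.zero_of_map_zero _
      (Abelian.Pseudoelement.pseudo_injective_of_mono (𝟙 A₂)) a h5
  rcases subq_ext h hh_mono hT with hTA₂ | hTcok
  · exact hA₂ T hTA₂
  · -- cokernel h ≅ cokernel f
    have hg₁q₂ : g₁ ≫ cokernel.π f = 0 := hg₁πf
    set q₂ : cokernel g₁ ⟶ cokernel f := cokernel.desc g₁ (cokernel.π f) hg₁πf with hq₂def
    have hhq₂ : h ≫ q₂ = 0 := by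
      rw [hhdef, Category.assoc, hq₂def, cokernel.π_desc, hg₂πf]
    set δ : cokernel h ⟶ cokernel f := cokernel.desc h q₂ hhq₂ with hδdef
    haveI hδ_epi : Epi δ := by
      haveI : Epi (cokernel.π h ≫ δ) := by
        rw [hδdef, cokernel.π_desc]
        haveI : Epi (cokernel.π g₁ ≫ q₂) := by
          rw [hq₂def, cokernel.π_desc]; infer_instance
        exact epi_of_epi (cokernel.π g₁) q₂
      exact epi_of_epi (cokernel.π h) δ
    haveI hδ_mono : Mono δ := by
      apply Abelian.Pseudoelement.mono_of_zero_of_map_zero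
      intro z hz
      obtain ⟨x₂, hx₂⟩ := Abelian.Pseudoelement.pseudo_surjective_of_epi (cokernel.π h) z
      obtain ⟨x, hx⟩ := Abelian.Pseudoelement.pseudo_surjective_of_epi (cokernel.π g₁) x₂
      have hx0 : (cokernel.π f) x = 0 := by
        have h1 : q₂ ((cokernel.π g₁) x) = (cokernel.π f) x := by
          rw [← Abelian.Pseudoelement.comp_apply, hq₂def, cokernel.π_desc]
        have h2 : δ ((cokernel.π h) x₂) = q₂ x₂ := by
          rw [← Abelian.Pseudoelement.comp_apply, hδdef, cokernel.π_desc]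
        rw [← h1, hx, ← h2, hx₂, hz]
      obtain ⟨a, ha⟩ := pseudo_exact_cokernel f x hx0
      have hfπ₁ : f ≫ cokernel.π g₁ = p₂ ≫ h := by
        rw [← hf_decomp, hhdef]
        simp only [Preadditive.add_comp, Category.assoc, cokernel.condition, comp_zero, zero_add]
      have : x₂ = h (p₂ a) := by
        rw [← hx, ← ha, ← Abelian.Pseudoelement.comp_apply, hfπ₁,
          Abelian.Pseudoelement.comp_apply]
      rw [← hx₂, this, ← Abelian.Pseudoelement.comp_apply, cokernel.condition]
      exact Abelian.Pseudoelement.zero_apply _ _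
    haveI : IsIso δ := isIso_of_mono_of_epi δ
    have hTS : IsSimpleSubquotient T (cokernel f) := subq_of_mono δ inferInstance hTcok
    obtain ⟨eTS⟩ := subq_iso_of_subq_simple hSsimple hTS
    exact subq_congr eTS hT.1 hSP'

/-- `X` has length at most `n` (in the sense of an explicit chain of subobjects). -/
def LengthLE : ℕ → 𝒜 → Prop
  | 0, X => IsZero X
  | (n + 1), X => ∃ (A : 𝒜) (f : A ⟶ X), Mono f ∧ Simple (cokernel f) ∧ LengthLE n A

theorem lengthLE_of_iso : ∀ (n : ℕ) {A B : 𝒜}, LengthLE n A → (A ≅ B) → LengthLE n B := by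
  intro n
  induction n with
  | zero => intro A B hA e; exact hA.of_iso e.symm
  | succ n _ =>
      intro A B hA e
      obtain ⟨A', f, hm, hs, hlen⟩ := hA
      haveI := hm
      refine ⟨A', f ≫ e.hom, mono_comp _ _, ?_, hlen⟩
      haveI := hs
      exact Simple.of_iso (cokernelCompIsIso f e.hom)

theorem lengthLE_of_hasFiniteLength {X : 𝒜} (h : HasFiniteLength X) :
    ∃ n, LengthLE n X := by
  obtain ⟨n, c, hc, h0, hlast, hs⟩ := h
  have key : ∀ m : ℕ, ∀ hm : m < n + 1, LengthLE m ((c ⟨m, hm⟩ : 𝒜)) := by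
    intro m
    induction m with
    | zero =>
        intro hm
        have h1 : c ⟨0, hm⟩ = ⊥ := by rw [show (⟨0, hm⟩ : Fin (n + 1)) = 0 from rfl, h0]
        rw [h1]
        exact (isZero_zero 𝒜).of_iso Subobject.botCoeIsoZero
    | succ k ih =>
        intro hm
        have hk : k < n + 1 := Nat.lt_of_succ_lt hm
        have hkn : k < n := Nat.lt_of_succ_lt_succ hm
        have hle : c ⟨k, hk⟩ ≤ c ⟨k + 1, hm⟩ := hc (by simp [Fin.mk_le_mk])
        refine ⟨_, Subobject.ofLE _ _ hle, inferInstance, ?_, ih hk⟩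
        exact hs ⟨k, hkn⟩
  have h1 := key n (Nat.lt_succ_self n)
  have h2 : c ⟨n, Nat.lt_succ_self n⟩ = ⊤ := by
    rw [show (⟨n, Nat.lt_succ_self n⟩ : Fin (n + 1)) = Fin.last n from rfl, hlast]
  rw [h2] at h1
  exact ⟨n, lengthLE_of_iso n h1 (asIso (⊤ : Subobject X).arrow)⟩

theorem main_ind {P₁ P₂ : 𝒜}
    (hlen : ∀ Y : 𝒜, HasFiniteLength Y)
    (hP₁ : Projective P₁) (hP₂ : Projective P₂)
    (hdisj : ∀ S : 𝒜, Simple S → ¬(IsSimpleSubquotient S P₁ ∧ IsSimpleSubquotient S P₂))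
    (hcover : ∀ S : 𝒜, Simple S → IsSimpleSubquotient S P₁ ∨ IsSimpleSubquotient S P₂)
    (hsurj₁ : ∀ S : 𝒜, IsSimpleSubquotient S P₁ → ∃ f : P₁ ⟶ S, Epi f)
    (hsurj₂ : ∀ S : 𝒜, IsSimpleSubquotient S P₂ → ∃ f : P₂ ⟶ S, Epi f) :
    ∀ (n : ℕ) (X : 𝒜), LengthLE n X →
      ∃ (X₁ X₂ : 𝒜) (_ : X ≅ X₁ ⊞ X₂),
        (∀ S : 𝒜, IsSimpleSubquotient S X₁ → IsSimpleSubquotient S P₁) ∧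
        (∀ S : 𝒜, IsSimpleSubquotient S X₂ → IsSimpleSubquotient S P₂) := by
  intro n
  induction n with
  | zero =>
      intro X hX
      have hzz : IsZero (X ⊞ X) := by
        rw [IsZero.iff_id_eq_zero, ← biprod.total,
          hX.eq_of_tgt (biprod.fst : X ⊞ X ⟶ X) 0, zero_comp,
          hX.eq_of_tgt (biprod.snd : X ⊞ X ⟶ X) 0, zero_comp, add_zero]
      exact ⟨X, X, hX.iso hzz,
        fun S hS => absurd hS (fun hS => no_subq_of_isZero hX hS),
        fun S hS => absurd hS (fun hS => no_subq_of_isZero hX hS)⟩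
  | succ n ih =>
      intro X hX
      obtain ⟨A, f, hmf, hs, hA⟩ := hX
      obtain ⟨A₁, A₂, e, hA₁, hA₂⟩ := ih A hA
      rcases hcover (cokernel f) hs with hc1 | hc2
      · obtain ⟨X₁, iso, hX₁⟩ := step hlen hP₁
          (fun S hS hpair => hdisj S hS ⟨hpair.2, hpair.1⟩) hsurj₁ f hmf hs hc1
          (e ≪≫ biprod.braiding A₁ A₂) hA₂ hA₁
        exact ⟨X₁, A₂, iso ≪≫ biprod.braiding A₂ X₁, hX₁, hA₂⟩
      · obtain ⟨X₂, iso, hX₂⟩ := step hlen hP₂ hdisj hsurj₂ f hmf hs hc2 e hA₁ hA₂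
        exact ⟨A₁, X₂, iso, hA₁, hX₂⟩

end Aux

/-- Morita-type decomposition criterion. Let `𝒜` be an abelian category in which every
object has finite length, and `P₁`, `P₂` projective objects such that: no simple object is a
simple subquotient of both; every simple object is a simple subquotient of one of them; and
each simple subquotient of `Pᵢ` receives an epimorphism from `Pᵢ`. Then every object `X`
decomposes as `X ≅ X₁ ⊞ X₂` where all simple subquotients of `Xᵢ` are simple subquotients
of `Pᵢ`, and there are no nonzero morphisms between `X₁` and `X₂` in either direction. -/
theorem morita_decomposition
    {𝒜 : Type u} [Category.{v} 𝒜] [Abelian 𝒜]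
    (hlen : ∀ X : 𝒜, HasFiniteLength X)
    (P₁ P₂ : 𝒜) (hP₁ : Projective P₁) (hP₂ : Projective P₂)
    (hdisj : ∀ S : 𝒜, Simple S → ¬(IsSimpleSubquotient S P₁ ∧ IsSimpleSubquotient S P₂))
    (hcover : ∀ S : 𝒜, Simple S → IsSimpleSubquotient S P₁ ∨ IsSimpleSubquotient S P₂)
    (hsurj₁ : ∀ S : 𝒜, IsSimpleSubquotient S P₁ → ∃ f : P₁ ⟶ S, Epi f)
    (hsurj₂ : ∀ S : 𝒜, IsSimpleSubquotient S P₂ → ∃ f : P₂ ⟶ S, Epi f) :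
    ∀ X : 𝒜, ∃ (X₁ X₂ : 𝒜) (_ : X ≅ X₁ ⊞ X₂),
      (∀ S : 𝒜, IsSimpleSubquotient S X₁ → IsSimpleSubquotient S P₁) ∧
      (∀ S : 𝒜, IsSimpleSubquotient S X₂ → IsSimpleSubquotient S P₂) ∧
      (∀ f : X₁ ⟶ X₂, f = 0) ∧ (∀ f : X₂ ⟶ X₁, f = 0) := by
  intro X
  obtain ⟨n, hn⟩ := lengthLE_of_hasFiniteLength (hlen X)
  obtain ⟨X₁, X₂, iso, h1, h2⟩ :=
    main_ind hlen hP₁ hP₂ hdisj hcover hsurj₁ hsurj₂ n X hn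
  refine ⟨X₁, X₂, iso, h1, h2, ?_, ?_⟩
  · exact fun g => hom_zero_of_classes hlen hdisj h1 h2 g
  · exact fun g => hom_zero_of_classes hlen
      (fun S hS hpair => hdisj S hS ⟨hpair.2, hpair.1⟩) h2 h1 g
end

section
/- Let G be a finite group, N a normal subgroup of G, k a field, and V a simple k[G]-module. Then the restriction of V to k[N] is a semisimple k[N]-module. -/
open MonoidAlgebra

/-- Clifford's theorem (semisimplicity of restriction): Let `G` be a finite group, `N ⊴ G`
a normal subgroup, `k` a field and `V` a simple `k[G]`-module. Then the restriction of `V`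
to `k[N]` is semisimple. The `k[N]`-module structure on `V` is required to be the restriction
of the `k[G]`-module structure along the inclusion `N ⊆ G`. -/
theorem clifford_restriction_isSemisimple
    {k G : Type*} [Field k] [Group G] [Finite G]
    (N : Subgroup G) [N.Normal]
    (V : Type*) [AddCommGroup V] [Module (MonoidAlgebra k G) V]
    [IsSimpleModule (MonoidAlgebra k G) V]
    [Module (MonoidAlgebra k ↥N) V]
    (hres : ∀ (x : MonoidAlgebra k ↥N) (v : V),
      x • v = MonoidAlgebra.mapDomainRingHom k N.subtype x • v) :
    IsSemisimpleModule (MonoidAlgebra k ↥N) V := by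
  classical
  set R := MonoidAlgebra k ↥N with hR
  set A := MonoidAlgebra k G with hA
  set π : R →+* A := MonoidAlgebra.mapDomainRingHom k N.subtype with hπdef
  have hπ : ∀ (n : ↥N) (a : k), π (single n a) = single (n : G) a := by
    intro n a
    simp [hπdef, MonoidAlgebra.mapDomainRingHom, Finsupp.mapDomain_single]
  have halg : ∀ r : k, algebraMap k A r = single (1 : G) r := by
    intro r
    show algebraMap k (MonoidAlgebra k G) r = single 1 r
    rw [MonoidAlgebra.coe_algebraMap]
    simp
  -- `V` is a finitely generated `R`-module
  haveI : Nontrivial V := IsSimpleModule.nontrivial A V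
  obtain ⟨v, hv⟩ := exists_ne (0 : V)
  have hsurj := IsSimpleModule.toSpanSingleton_surjective A hv
  haveI : Module.Finite R V := by
    obtain ⟨s, hs⟩ := Set.Finite.exists_finset_coe
      (Set.finite_range (fun g : G => (single g 1 : A) • v))
    refine ⟨⟨s, ?_⟩⟩
    rw [hs, eq_top_iff]
    rintro w -
    obtain ⟨x, rfl⟩ := hsurj w
    show (x • v : V) ∈ _
    induction x using MonoidAlgebra.induction_on with
    | of g =>
      refine Submodule.subset_span ⟨g, ?_⟩
      simp [MonoidAlgebra.of_apply]
    | add f g hf hg =>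
      rw [add_smul]; exact Submodule.add_mem _ hf hg
    | smul r f hf =>
      have h1 : π (single (1 : ↥N) r) = single (1 : G) r := by
        rw [hπ, OneMemClass.coe_one]
      rw [Algebra.smul_def, halg, mul_smul, ← h1, ← hres]
      exact Submodule.smul_mem _ _ hf
  haveI : Module.Finite k R := inferInstance
  haveI : IsArtinianRing R := isArtinian_of_tower k inferInstance
  haveI : IsArtinian R V := inferInstance
  haveI : IsAtomic (Submodule R V) :=
    isAtomic_of_orderBot_wellFounded_lt (IsWellFounded.wf)
  -- the socle
  set S : Submodule R V := sSup {m : Submodule R V | IsAtom m} with hS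
  -- conjugation ring automorphisms and semilinear equivalences
  have key : ∀ g : G, ∀ s ∈ S, (single g 1 : A) • s ∈ S := by
    intro g
    set cg : R ≃+* R :=
      (MonoidAlgebra.domCongr k k (MulAut.conjNormal g : ↥N ≃* ↥N)).toRingEquiv with hcg
    have hcgs : ∀ (n : ↥N) (a : k), cg (single n a) = single (MulAut.conjNormal g n) a := by
      intro n a; exact MonoidAlgebra.domCongr_single (R := k) (A := k) _ n a
    -- key commutation identity
    have hcomm : ∀ x : R, (single g 1 : A) * π x = π (cg x) * single g 1 := by
      intro x
      induction x using MonoidAlgebra.induction_on with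
      | of n =>
        rw [MonoidAlgebra.of_apply, hπ, hcgs, hπ, MonoidAlgebra.single_mul_single,
          MonoidAlgebra.single_mul_single]
        simp [MulAut.conjNormal_apply, mul_assoc]
      | add f h hf hh =>
        rw [map_add, map_add, map_add, mul_add, add_mul, hf, hh]
      | smul r f hf =>
        have hsm : ∀ y : R, π (r • y) = r • π y := fun y =>
          MonoidAlgebra.mapDomain_smul (N.subtype : ↥N → G) r y
        have h1 : π (r • f) = r • π f := hsm f
        have h2 : cg (r • f) = r • cg f :=
          map_smul (MonoidAlgebra.domCongr k k (MulAut.conjNormal g : ↥N ≃* ↥N)).toLinearEquiv r f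
        have h1' : π (r • cg f) = r • π (cg f) := hsm (cg f)
        rw [h1, h2, h1', mul_smul_comm, smul_mul_assoc, hf]
    haveI i1 : RingHomInvPair (cg : R →+* R) (cg.symm : R →+* R) :=
      RingHomInvPair.of_ringEquiv cg
    haveI i2 : RingHomInvPair (cg.symm : R →+* R) (cg : R →+* R) :=
      RingHomInvPair.symm (cg : R →+* R) (cg.symm : R →+* R)
    let e : V ≃ₛₗ[(cg : R →+* R)] V :=
      { toFun := fun w => (single g 1 : A) • w
        map_add' := fun w₁ w₂ => smul_add _ _ _
        map_smul' := fun x w => by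
          show (single g 1 : A) • (x • w) = cg x • ((single g 1 : A) • w)
          rw [hres x, hres (cg x), ← mul_smul, ← mul_smul, hcomm]
        invFun := fun w => (single g⁻¹ 1 : A) • w
        left_inv := fun w => by
          show (single g⁻¹ 1 : A) • ((single g 1 : A) • w) = w
          rw [← mul_smul, MonoidAlgebra.single_mul_single, inv_mul_cancel, mul_one,
            ← MonoidAlgebra.one_def, one_smul]
        right_inv := fun w => by
          show (single g 1 : A) • ((single g⁻¹ 1 : A) • w) = w
          rw [← mul_smul, MonoidAlgebra.single_mul_single, mul_inv_cancel, mul_one,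
            ← MonoidAlgebra.one_def, one_smul] }
    intro s hs
    have hmapS : (Submodule.orderIsoMapComap e) S ≤ S := by
      rw [hS, OrderIso.map_sSup]
      apply iSup₂_le
      intro p hp
      exact le_sSup
        (show (Submodule.orderIsoMapComap e) p ∈ {m : Submodule R V | IsAtom m} from
          ((Submodule.orderIsoMapComap e).isAtom_iff p).mpr hp)
    have hes : e s ∈ (Submodule.orderIsoMapComap e) S := by
      rw [Submodule.orderIsoMapComap_apply]
      exact ⟨s, hs, rfl⟩
    exact hmapS hes
  -- `S` is nonzero
  obtain ⟨m, hm, -⟩ : ∃ m : Submodule R V, IsAtom m ∧ m ≤ ⊤ := by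
    rcases (IsAtomic.eq_bot_or_exists_atom_le (⊤ : Submodule R V)) with h | h
    · exact absurd (Submodule.eq_bot_iff _ |>.mp h v trivial) hv
    · exact h
  obtain ⟨w, hwm, hw0⟩ := Submodule.exists_mem_ne_zero_of_ne_bot hm.1
  have hwS : w ∈ S := le_sSup (show m ∈ {m : Submodule R V | IsAtom m} from hm) hwm
  -- the socle is a `k[G]`-submodule
  let S' : Submodule A V :=
    { carrier := (S : Set V)
      add_mem' := fun h1 h2 => S.add_mem h1 h2
      zero_mem' := S.zero_mem
      smul_mem' := by
        intro x s hs
        show x • s ∈ S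
        induction x using MonoidAlgebra.induction_on with
        | of g => rw [MonoidAlgebra.of_apply]; exact key g s hs
        | add f h hf hh => rw [add_smul]; exact S.add_mem hf hh
        | smul r f hf =>
          have h1 : π (single (1 : ↥N) r) = single (1 : G) r := by
            rw [hπ, OneMemClass.coe_one]
          rw [Algebra.smul_def, halg, mul_smul, ← h1, ← hres]
          exact S.smul_mem _ hf }
  have hS'top : S' = ⊤ := by
    rcases eq_bot_or_eq_top S' with h | h
    · have hw' : w ∈ S' := hwS
      rw [h] at hw'
      exact absurd (by simpa using hw') hw0
    · exact h
  have hStop : S = ⊤ := by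
    rw [eq_top_iff]
    intro u _
    have hu : u ∈ S' := by rw [hS'top]; trivial
    exact hu
  apply IsSemisimpleModule.of_sSup_simples_eq_top
  simp_rw [isSimpleModule_iff_isAtom]
  exact hStop
end

section
/- Let G be a finite group, N ⊴ G a normal subgroup, k a field, and V a simple k[G]-module. Then any two simple k[N]-submodules of the restriction V|_N are conjugate under G; that is, if W₁ and W₂ are simple k[N]-submodules of V|_N, there exists g ∈ G such that W₂ is isomorphic to the g-twist of W₁ (the k[N]-module with underlying space W₁ and action n · w = (g⁻¹ n g) w). -/
open MonoidAlgebra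

namespace CliffordAux

noncomputable section

set_option linter.unusedSectionVars false

variable {k G : Type*} [Field k] [Group G] {N : Subgroup G} [N.Normal]
  {V : Type*} [AddCommGroup V] [Module (MonoidAlgebra k G) V]
  [Module (MonoidAlgebra k ↥N) V]

/-- Conjugation twist on the group algebra of `N`. -/
def sig (g : G) : MonoidAlgebra k ↥N →+* MonoidAlgebra k ↥N :=
  MonoidAlgebra.mapDomainRingHom k (MulAut.conjNormal g : MulAut ↥N)

lemma sig_single (g : G) (n : ↥N) (c : k) :
    sig g (MonoidAlgebra.single n c) = MonoidAlgebra.single (MulAut.conjNormal g n) c :=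
  MonoidAlgebra.mapDomain_single

lemma mapsub_single (n : ↥N) (c : k) :
    MonoidAlgebra.mapDomainRingHom k N.subtype (MonoidAlgebra.single n c)
      = MonoidAlgebra.single (n : G) c :=
  MonoidAlgebra.mapDomain_single

lemma sig_sig (g g' : G) (x : MonoidAlgebra k ↥N) :
    sig g (sig g' x) = sig (g * g') x := by
  induction x using MonoidAlgebra.induction_linear with
  | zero => simp
  | add f h hf hh => simp only [map_add, hf, hh]
  | single n c =>
      rw [sig_single, sig_single, sig_single]
      congr 1
      ext
      simp [mul_assoc]

lemma sig_one (x : MonoidAlgebra k ↥N) : sig (1 : G) x = x := by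
  induction x using MonoidAlgebra.induction_linear with
  | zero => simp
  | add f h hf hh => simp only [map_add, hf, hh]
  | single n c =>
      rw [sig_single]
      congr 1
      ext
      simp

lemma sig_sig_inv (g : G) (x : MonoidAlgebra k ↥N) : sig g (sig g⁻¹ x) = x := by
  rw [sig_sig, mul_inv_cancel, sig_one]

/-- The key commutation identity in `k[G]`. -/
lemma key (g : G) (x : MonoidAlgebra k ↥N) :
    (MonoidAlgebra.single g 1 : MonoidAlgebra k G) * MonoidAlgebra.mapDomainRingHom k N.subtype x
      = MonoidAlgebra.mapDomainRingHom k N.subtype (sig g x)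
        * MonoidAlgebra.single g 1 := by
  induction x using MonoidAlgebra.induction_linear with
  | zero => simp
  | add f h hf hh => simp only [map_add, mul_add, add_mul, hf, hh]
  | single n c =>
      rw [sig_single, mapsub_single, mapsub_single, MonoidAlgebra.single_mul_single,
        MonoidAlgebra.single_mul_single, one_mul, mul_one]
      congr 1
      simp [mul_assoc]

/-- Action of `g ∈ G` on `V` as an additive map. -/
def phi (g : G) : V →+ V :=
  AddMonoidHom.mk' (fun v => (MonoidAlgebra.single g (1 : k) : MonoidAlgebra k G) • v)
    fun a b => smul_add _ a b

lemma phi_apply (g : G) (v : V) :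
    phi (k := k) g v = (MonoidAlgebra.single g (1 : k) : MonoidAlgebra k G) • v := rfl

lemma phi_phi (g g' : G) (v : V) : phi (k := k) g (phi (k := k) g' v) = phi (k := k) (g * g') v := by
  simp [phi_apply, ← mul_smul, MonoidAlgebra.single_mul_single]

lemma phi_one (v : V) : phi (k := k) (1 : G) v = v := by
  rw [phi_apply, ← MonoidAlgebra.one_def, one_smul]

lemma phi_eq_zero_iff (g : G) (v : V) : phi (k := k) g v = 0 ↔ v = 0 := by
  constructor
  · intro h
    have := congrArg (phi (k := k) g⁻¹) h
    rwa [phi_phi, inv_mul_cancel, phi_one, map_zero] at this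
  · rintro rfl; exact map_zero _

variable (hres : ∀ (x : MonoidAlgebra k ↥N) (v : V),
  x • v = MonoidAlgebra.mapDomainRingHom k N.subtype x • v)

include hres

lemma phi_smul (g : G) (x : MonoidAlgebra k ↥N) (v : V) :
    phi (k := k) g (x • v) = sig g x • phi (k := k) g v := by
  rw [phi_apply, phi_apply, hres x v, hres (sig g x), ← mul_smul, ← mul_smul, key]

lemma smul_phi (g : G) (x : MonoidAlgebra k ↥N) (v : V) :
    x • phi (k := k) g v = phi (k := k) g (sig g⁻¹ x • v) := by
  rw [phi_smul hres, sig_sig_inv]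

lemma single_smul_phi (g' g : G) (c : k) (w : V) :
    (MonoidAlgebra.single g' c : MonoidAlgebra k G) • phi (k := k) g w
      = phi (k := k) (g' * g) ((MonoidAlgebra.single (1 : ↥N) c : MonoidAlgebra k ↥N) • w) := by
  rw [phi_apply, phi_apply, hres, mapsub_single, ← mul_smul, ← mul_smul,
    MonoidAlgebra.single_mul_single, MonoidAlgebra.single_mul_single]
  simp

/-- The `g`-translate of a `k[N]`-submodule of `V`. -/
def conjSub (g : G) (W : Submodule (MonoidAlgebra k ↥N) V) :
    Submodule (MonoidAlgebra k ↥N) V where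
  carrier := phi (k := k) g '' W
  add_mem' := by
    rintro _ _ ⟨a, ha, rfl⟩ ⟨b, hb, rfl⟩
    exact ⟨a + b, W.add_mem ha hb, map_add _ _ _⟩
  zero_mem' := ⟨0, W.zero_mem, map_zero _⟩
  smul_mem' := by
    rintro x _ ⟨w, hw, rfl⟩
    exact ⟨sig g⁻¹ x • w, W.smul_mem _ hw, by rw [phi_smul hres, sig_sig_inv]⟩

lemma mem_conjSub {g : G} {W : Submodule (MonoidAlgebra k ↥N) V} {v : V} :
    v ∈ conjSub hres g W ↔ ∃ w ∈ W, phi (k := k) g w = v := Iff.rfl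

lemma isAtom_conjSub (g : G) {W : Submodule (MonoidAlgebra k ↥N) V} (hW : IsAtom W) :
    IsAtom (conjSub hres g W) := by
  constructor
  · obtain ⟨w, hwW, hw⟩ := W.ne_bot_iff.mp hW.1
    refine (Submodule.ne_bot_iff _).mpr ⟨phi (k := k) g w, ⟨w, hwW, rfl⟩, ?_⟩
    simpa [phi_eq_zero_iff] using hw
  · intro b hb
    set c : Submodule (MonoidAlgebra k ↥N) V :=
      { carrier := {v | v ∈ W ∧ phi (k := k) g v ∈ b}
        add_mem' := fun ha hb' => ⟨W.add_mem ha.1 hb'.1, by rw [map_add]; exact b.add_mem ha.2 hb'.2⟩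
        zero_mem' := ⟨W.zero_mem, by rw [map_zero]; exact b.zero_mem⟩
        smul_mem' := fun x v hv =>
          ⟨W.smul_mem _ hv.1, by rw [phi_smul hres]; exact b.smul_mem _ hv.2⟩ } with hc
    have hcW : c ≤ W := fun v hv => hv.1
    have hcne : c ≠ W := by
      intro hEq
      refine hb.ne ?_
      refine le_antisymm hb.le ?_
      rintro _ ⟨w, hwW, rfl⟩
      have : w ∈ c := hEq ▸ hwW
      exact this.2
    have hcbot : c = ⊥ := hW.2 c (lt_of_le_of_ne hcW hcne)
    refine (Submodule.eq_bot_iff _).mpr ?_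
    intro v hvb
    obtain ⟨w, hwW, rfl⟩ := hb.le hvb
    have : w ∈ c := ⟨hwW, hvb⟩
    rw [hcbot, Submodule.mem_bot] at this
    rw [this, map_zero]

end

end CliffordAux

open CliffordAux


/-- Clifford's theorem (conjugacy): Let `G` be a finite group, `N ⊴ G`, `k` a field and `V`
a simple `k[G]`-module, with the `k[N]`-module structure on `V` given by restriction.
Any two simple `k[N]`-submodules `W₁`, `W₂` of `V|_N` are `G`-conjugate: there are `g : G`
and an additive isomorphism `e : W₁ ≃+ W₂` intertwining the `k[N]`-action on `W₂` with the
`g`-twisted `k[N]`-action on `W₁` (where `n` acts through `g⁻¹ n g`). -/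
theorem clifford_conjugacy
    {k G : Type*} [Field k] [Group G] [Finite G]
    (N : Subgroup G) [N.Normal]
    (V : Type*) [AddCommGroup V] [Module (MonoidAlgebra k G) V]
    [IsSimpleModule (MonoidAlgebra k G) V]
    [Module (MonoidAlgebra k ↥N) V]
    (hres : ∀ (x : MonoidAlgebra k ↥N) (v : V),
      x • v = MonoidAlgebra.mapDomainRingHom k N.subtype x • v)
    (W₁ W₂ : Submodule (MonoidAlgebra k ↥N) V)
    (hW₁ : IsSimpleModule (MonoidAlgebra k ↥N) W₁)
    (hW₂ : IsSimpleModule (MonoidAlgebra k ↥N) W₂) :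
    ∃ (g : G) (e : W₁ ≃+ W₂), ∀ (x : MonoidAlgebra k ↥N) (w : W₁),
      e (MonoidAlgebra.mapDomainRingHom k ((MulAut.conjNormal g⁻¹ : MulAut ↥N) : ↥N →* ↥N) x • w)
        = x • e w := by

  classical
  have hA₁ : IsAtom W₁ := isSimpleModule_iff_isAtom.mp hW₁
  have hA₂ : IsAtom W₂ := isSimpleModule_iff_isAtom.mp hW₂
  -- the sum of all translates of W₁ is a k[G]-submodule
  set U : Submodule (MonoidAlgebra k ↥N) V := ⨆ g : G, conjSub hres g W₁ with hUdef
  have hsmulU : ∀ (g' : G) (c : k) (v : V), v ∈ U →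
      (MonoidAlgebra.single g' c : MonoidAlgebra k G) • v ∈ U := by
    intro g' c v hv
    refine Submodule.iSup_induction (motive := fun v =>
      (MonoidAlgebra.single g' c : MonoidAlgebra k G) • v ∈ U) _ hv ?_ (by simp) ?_
    · rintro g _ ⟨w, hwW, rfl⟩
      rw [single_smul_phi hres]
      exact Submodule.mem_iSup_of_mem (g' * g) ⟨_, W₁.smul_mem _ hwW, rfl⟩
    · intro a b ha hb
      rw [smul_add]
      exact U.add_mem ha hb
  set U' : Submodule (MonoidAlgebra k G) V :=
    { carrier := U
      add_mem' := fun ha hb => U.add_mem ha hb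
      zero_mem' := U.zero_mem
      smul_mem' := by
        intro x v hv
        induction x using MonoidAlgebra.induction_linear with
        | zero => simpa using U.zero_mem
        | add f h hf hh => rw [add_smul]; exact U.add_mem hf hh
        | single g' c => exact hsmulU g' c v hv } with hU'def
  have hW₁U : W₁ ≤ U := by
    intro w hw
    exact Submodule.mem_iSup_of_mem 1 ⟨w, hw, phi_one w⟩
  have hU'top : U' = ⊤ := by
    rcases eq_bot_or_eq_top U' with h | h
    · exfalso
      obtain ⟨w, hwW, hw⟩ := W₁.ne_bot_iff.mp hA₁.1
      have : w ∈ U' := hW₁U hwW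
      rw [h, Submodule.mem_bot] at this
      exact hw this
    · exact h
  have hUtop : U = ⊤ := by
    rw [Submodule.eq_top_iff']
    intro x
    show x ∈ U'
    rw [hU'top]; trivial
  -- V is semisimple as a k[N]-module
  have hss : sSup {m : Submodule (MonoidAlgebra k ↥N) V | IsSimpleModule (MonoidAlgebra k ↥N) m} = ⊤ := by
    refine le_antisymm le_top ?_
    rw [← hUtop, hUdef]
    refine iSup_le fun g => le_sSup ?_
    exact isSimpleModule_iff_isAtom.mpr (isAtom_conjSub hres g hA₁)
  haveI : IsSemisimpleModule (MonoidAlgebra k ↥N) V :=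
    IsSemisimpleModule.of_sSup_simples_eq_top hss
  obtain ⟨C, hC⟩ := exists_isCompl W₂
  set p : V →ₗ[MonoidAlgebra k ↥N] W₂ := W₂.linearProjOfIsCompl C hC with hp
  -- find a translate of W₁ on which p is nonzero
  have hex : ∃ (g : G) (w : V), w ∈ W₁ ∧ p (phi (k := k) g w) ≠ 0 := by
    by_contra h
    push_neg at h
    have hp0 : ∀ v : V, p v = 0 := by
      intro v
      have hv : v ∈ U := hUtop ▸ Submodule.mem_top
      refine Submodule.iSup_induction (motive := fun v => p v = 0) _ hv ?_ (map_zero p) ?_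
      · rintro g _ ⟨w, hwW, rfl⟩
        exact h g w hwW
      · intro a b ha hb
        rw [map_add, ha, hb, add_zero]
    obtain ⟨w₂, hw₂W, hw₂⟩ := W₂.ne_bot_iff.mp hA₂.1
    have h1 : p w₂ = ⟨w₂, hw₂W⟩ := Submodule.linearProjOfIsCompl_apply_left hC ⟨w₂, hw₂W⟩
    rw [hp0 w₂] at h1
    exact hw₂ (by simpa using congrArg Subtype.val h1.symm)
  obtain ⟨g, w₀, hw₀W, hw₀⟩ := hex
  -- the candidate map
  set emap : W₁ →+ W₂ :=
    AddMonoidHom.mk' (fun w => p (phi (k := k) g (w : V)))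
      (fun a b => by show p ((phi (k := k) g) ((a : V) + (b : V))) = _; rw [map_add, map_add]) with hemap
  have hinter : ∀ (x : MonoidAlgebra k ↥N) (w : W₁),
      emap ((sig g⁻¹ x) • w) = x • emap w := by
    intro x w
    show p (phi (k := k) g (((sig g⁻¹ x) • w : W₁) : V)) = x • p (phi (k := k) g (w : V))
    rw [SetLike.val_smul, phi_smul hres, sig_sig_inv, map_smul]
  -- injectivity
  have hinj : Function.Injective emap := by
    refine (injective_iff_map_eq_zero emap).mpr ?_
    intro w hw
    set Kc : Submodule (MonoidAlgebra k ↥N) V :=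
      { carrier := {v | v ∈ W₁ ∧ p (phi (k := k) g v) = 0}
        add_mem' := fun ha hb => ⟨W₁.add_mem ha.1 hb.1, by rw [map_add, map_add, ha.2, hb.2, add_zero]⟩
        zero_mem' := ⟨W₁.zero_mem, by rw [map_zero, map_zero]⟩
        smul_mem' := fun x v hv =>
          ⟨W₁.smul_mem _ hv.1, by rw [phi_smul hres, map_smul, hv.2, smul_zero]⟩ } with hKc
    have hKcW : Kc ≤ W₁ := fun v hv => hv.1
    have hKcne : Kc ≠ W₁ := fun hEq => hw₀ (hEq ▸ hw₀W : w₀ ∈ Kc).2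
    have hKbot : Kc = ⊥ := hA₁.2 Kc (lt_of_le_of_ne hKcW hKcne)
    have : (w : V) ∈ Kc := ⟨w.2, hw⟩
    rw [hKbot, Submodule.mem_bot] at this
    exact Subtype.ext this
  -- surjectivity
  have hsurj : Function.Surjective emap := by
    set Rg : Submodule (MonoidAlgebra k ↥N) V :=
      { carrier := {v | ∃ w, w ∈ W₁ ∧ ((p (phi (k := k) g w) : W₂) : V) = v}
        add_mem' := by
          rintro _ _ ⟨a, ha, rfl⟩ ⟨b, hb, rfl⟩
          exact ⟨a + b, W₁.add_mem ha hb, by rw [map_add, map_add, Submodule.coe_add]⟩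
        zero_mem' := ⟨0, W₁.zero_mem, by rw [map_zero, map_zero, Submodule.coe_zero]⟩
        smul_mem' := by
          rintro x _ ⟨w, hw, rfl⟩
          refine ⟨sig g⁻¹ x • w, W₁.smul_mem _ hw, ?_⟩
          rw [phi_smul hres, sig_sig_inv, map_smul, SetLike.val_smul] } with hRg
    have hRgW₂ : Rg ≤ W₂ := by
      intro v hv
      obtain ⟨w, hw, hveq⟩ := hv
      exact hveq ▸ (p (phi (k := k) g w)).2
    have hRgne : Rg ≠ ⊥ := by
      refine (Submodule.ne_bot_iff _).mpr ⟨_, ⟨w₀, hw₀W, rfl⟩, ?_⟩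
      simpa [Submodule.coe_eq_zero] using hw₀
    have hRgtop : Rg = W₂ := by
      rcases lt_or_eq_of_le hRgW₂ with h | h
      · exact absurd (hA₂.2 Rg h) hRgne
      · exact h
    intro w₂
    have : (w₂ : V) ∈ Rg := by rw [hRgtop]; exact w₂.2
    obtain ⟨w, hw, hweq⟩ := this
    exact ⟨⟨w, hw⟩, Subtype.ext hweq⟩
  refine ⟨g, AddEquiv.ofBijective emap ⟨hinj, hsurj⟩, ?_⟩
  intro x w
  exact hinter x w
end

section
/- Let G be a finite group, N ⊴ G a normal subgroup, and k a field. Then every simple k[N]-module W is isomorphic to a k[N]-submodule of the restriction to N of some simple k[G]-module. -/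
universe u

open MonoidAlgebra

namespace SimpleEmbedAux

variable {k G : Type u} [Field k] [Group G] (N : Subgroup G)

/-- Projection `k[G] → k[N]` : keep only coefficients supported in `N`. -/
noncomputable def proj (x : MonoidAlgebra k G) : MonoidAlgebra k ↥N :=
  MonoidAlgebra.ofCoeff (Finsupp.comapDomain (Subtype.val) x.coeff (Subtype.val_injective.injOn))

@[simp] lemma proj_apply (x : MonoidAlgebra k G) (n : ↥N) : (proj N x).coeff n = x.coeff ↑n := rfl

lemma proj_add (x y : MonoidAlgebra k G) : proj N (x + y) = proj N x + proj N y := by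
  ext n; rfl

lemma proj_zero : proj N (0 : MonoidAlgebra k G) = 0 := by
  ext n; rfl

lemma proj_one : proj N (1 : MonoidAlgebra k G) = 1 := by
  classical
  ext n
  rw [proj_apply, MonoidAlgebra.one_def, MonoidAlgebra.one_def, MonoidAlgebra.coeff_single,
    MonoidAlgebra.coeff_single, Finsupp.single_apply,
    Finsupp.single_apply]
  by_cases h : (1 : ↥N) = n
  · rw [if_pos h, if_pos]
    exact_mod_cast congrArg Subtype.val h
  · rw [if_neg h, if_neg]
    intro hc
    exact h (Subtype.ext (by exact_mod_cast hc))

lemma proj_single_mul (m : ↥N) (c : k) (b : MonoidAlgebra k G) :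
    proj N (MonoidAlgebra.single (↑m : G) c * b)
      = MonoidAlgebra.single m c * proj N b := by
  ext n
  rw [proj_apply, MonoidAlgebra.single_mul_apply, MonoidAlgebra.single_mul_apply, proj_apply]
  congr 1

lemma proj_mul_single (b : MonoidAlgebra k G) (m : ↥N) (c : k) :
    proj N (b * MonoidAlgebra.single (↑m : G) c)
      = proj N b * MonoidAlgebra.single m c := by
  ext n
  rw [proj_apply, MonoidAlgebra.mul_single_apply, MonoidAlgebra.mul_single_apply, proj_apply]
  congr 2

lemma f_single (m : ↥N) (c : k) :
    (MonoidAlgebra.mapDomainRingHom k N.subtype) (MonoidAlgebra.single m c)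
      = MonoidAlgebra.single (↑m : G) c := by
  simp

lemma proj_fmul (a : MonoidAlgebra k ↥N) (b : MonoidAlgebra k G) :
    proj N ((MonoidAlgebra.mapDomainRingHom k N.subtype) a * b) = a * proj N b := by
  induction a using MonoidAlgebra.induction with
  | zero => simp [proj_zero]
  | single_add m c s _ _ ih =>
      have h1 : (MonoidAlgebra.mapDomainRingHom k N.subtype) (MonoidAlgebra.single m c + s)
          = MonoidAlgebra.single (↑m : G) c
            + (MonoidAlgebra.mapDomainRingHom k N.subtype) s := by
        rw [map_add, f_single]
      rw [h1, add_mul, proj_add, ih, add_mul, proj_single_mul]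

lemma proj_mulf (b : MonoidAlgebra k G) (a : MonoidAlgebra k ↥N) :
    proj N (b * (MonoidAlgebra.mapDomainRingHom k N.subtype) a) = proj N b * a := by
  induction a using MonoidAlgebra.induction with
  | zero => simp [proj_zero]
  | single_add m c s _ _ ih =>
      have h1 : (MonoidAlgebra.mapDomainRingHom k N.subtype) (MonoidAlgebra.single m c + s)
          = MonoidAlgebra.single (↑m : G) c
            + (MonoidAlgebra.mapDomainRingHom k N.subtype) s := by
        rw [map_add, f_single]
      rw [h1, mul_add, proj_add, ih, mul_add, proj_mul_single]

variable (k) in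
/-- The canonical embedding of `W` into the coinduced module `Hom_{k[N]}(k[G], W)`. -/
noncomputable def jfun (W : Type u) [AddCommGroup W] [Module (MonoidAlgebra k ↥N) W] (w : W) :
    ((ModuleCat.coextendScalars (MonoidAlgebra.mapDomainRingHom k N.subtype)).obj
      (ModuleCat.of (MonoidAlgebra k ↥N) W)) :=
  { toFun := fun b => proj N b • w
    map_add' := fun x y => by
      show proj N (x + y) • w = proj N x • w + proj N y • w
      exact (congrArg (· • w) (proj_add N x y)).trans (add_smul _ _ _)
    map_smul' := fun a x => by
      show proj N ((MonoidAlgebra.mapDomainRingHom k N.subtype) a • x) • w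
        = a • (proj N x • w)
      exact (congrArg (· • w) (proj_fmul N a x)).trans (mul_smul _ _ _) }

variable (W : Type u) [AddCommGroup W] [Module (MonoidAlgebra k ↥N) W]

lemma jfun_apply (w : W) (b : MonoidAlgebra k G) : jfun k N W w b = proj N b • w := rfl

lemma jfun_add (w w' : W) : jfun k N W (w + w') = jfun k N W w + jfun k N W w' := by
  refine LinearMap.ext fun x => ?_
  show proj N x • (w + w') = proj N x • w + proj N x • w'
  rw [smul_add]

lemma jfun_smul (a : MonoidAlgebra k ↥N) (w : W) :
    jfun k N W (a • w) = (MonoidAlgebra.mapDomainRingHom k N.subtype) a • jfun k N W w := by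
  have key : ∀ (x : MonoidAlgebra k G),
      proj N x • (a • w)
        = proj N (x * (MonoidAlgebra.mapDomainRingHom k N.subtype) a) • w := by
    intro x
    rw [proj_mulf, mul_smul]
  exact LinearMap.ext fun x => key x

end SimpleEmbedAux

open SimpleEmbedAux

/-- Let `G` be a finite group, `N ⊴ G` and `k` a field. Every simple `k[N]`-module `W`
embeds as a `k[N]`-submodule into the restriction to `N` of some simple `k[G]`-module. -/
theorem simple_module_embeds_in_restriction_of_simple
    {k G : Type u} [Field k] [Group G] [Finite G]
    (N : Subgroup G) [N.Normal]
    (W : Type u) [AddCommGroup W] [Module (MonoidAlgebra k ↥N) W]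
    [IsSimpleModule (MonoidAlgebra k ↥N) W] :
    ∃ V : ModuleCat.{u} (MonoidAlgebra k G),
      IsSimpleModule (MonoidAlgebra k G) V ∧
      ∃ φ : W →ₗ[MonoidAlgebra k ↥N]
          ((ModuleCat.restrictScalars (MonoidAlgebra.mapDomainRingHom k N.subtype)).obj V),
        Function.Injective φ := by
  classical
  have : Nontrivial W := IsSimpleModule.nontrivial (MonoidAlgebra k ↥N) W
  obtain ⟨w₀, hw₀⟩ := exists_ne (0 : W)
  have hu₀ : jfun k N W w₀ ≠ 0 := by
    intro h
    apply hw₀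
    have h1 := congrArg
      (fun (g : ((ModuleCat.coextendScalars (MonoidAlgebra.mapDomainRingHom k N.subtype)).obj
        (ModuleCat.of (MonoidAlgebra k ↥N) W))) => g (1 : MonoidAlgebra k G)) h
    have h2 : jfun k N W w₀ (1 : MonoidAlgebra k G) = 0 := h1
    rwa [jfun_apply, proj_one, one_smul] at h2
  set U : Submodule (MonoidAlgebra k G)
      ((ModuleCat.coextendScalars (MonoidAlgebra.mapDomainRingHom k N.subtype)).obj
        (ModuleCat.of (MonoidAlgebra k ↥N) W)) :=
    Submodule.span (MonoidAlgebra k G) {jfun k N W w₀} with hU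
  have hmem : ∀ w : W, jfun k N W w ∈ U := by
    intro w
    have hsp : (Submodule.span (MonoidAlgebra k ↥N) {w₀}) = ⊤ := by
      rcases eq_bot_or_eq_top (Submodule.span (MonoidAlgebra k ↥N) {w₀}) with h | h
      · exfalso
        apply hw₀
        have h2 : w₀ ∈ Submodule.span (MonoidAlgebra k ↥N) {w₀} :=
          Submodule.mem_span_singleton_self w₀
        rw [h] at h2
        simpa using h2
      · exact h
    have hw : w ∈ Submodule.span (MonoidAlgebra k ↥N) {w₀} := by rw [hsp]; trivial
    obtain ⟨a, rfl⟩ := Submodule.mem_span_singleton.mp hw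
    rw [jfun_smul]
    exact Submodule.smul_mem _ _ (Submodule.mem_span_singleton_self _)
  have hfg : (⊤ : Submodule (MonoidAlgebra k G) ↥U).FG :=
    (Submodule.fg_top U).mpr (Submodule.fg_span_singleton _)
  have hco : IsCoatomic (Submodule (MonoidAlgebra k G) ↥U) :=
    CompleteLattice.coatomic_of_top_compact ((Submodule.fg_iff_compact _).mp hfg)
  have hUnt : Nontrivial ↥U :=
    ⟨⟨⟨jfun k N W w₀, Submodule.mem_span_singleton_self _⟩, 0, by
      intro h
      exact hu₀ (by simpa using congrArg Subtype.val h)⟩⟩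
  have hbotne : (⊥ : Submodule (MonoidAlgebra k G) ↥U) ≠ ⊤ := bot_ne_top
  obtain ⟨M, hM, -⟩ := (hco.eq_top_or_exists_le_coatom ⊥).resolve_left hbotne
  refine ⟨ModuleCat.of (MonoidAlgebra k G) (↥U ⧸ M),
    isSimpleModule_iff_isCoatom.mpr hM, ?_⟩
  let φ₀ : W → (↥U ⧸ M) := fun w => Submodule.Quotient.mk ⟨jfun k N W w, hmem w⟩
  have hsmul : ∀ (a : MonoidAlgebra k ↥N) (w : W),
      φ₀ (a • w) = (MonoidAlgebra.mapDomainRingHom k N.subtype) a • φ₀ w := by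
    intro a w
    have h1 : (⟨jfun k N W (a • w), hmem _⟩ : ↥U)
        = (MonoidAlgebra.mapDomainRingHom k N.subtype) a • ⟨jfun k N W w, hmem w⟩ :=
      Subtype.ext (jfun_smul N W a w)
    show Submodule.Quotient.mk ⟨jfun k N W (a • w), hmem _⟩
      = (MonoidAlgebra.mapDomainRingHom k N.subtype) a • φ₀ w
    rw [h1, Submodule.Quotient.mk_smul]
  let φ : W →ₗ[MonoidAlgebra k ↥N]
      ((ModuleCat.restrictScalars (MonoidAlgebra.mapDomainRingHom k N.subtype)).obj
        (ModuleCat.of (MonoidAlgebra k G) (↥U ⧸ M))) :=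
    { toFun := φ₀
      map_add' := fun w w' => by
        have h1 : (⟨jfun k N W (w + w'), hmem _⟩ : ↥U)
            = ⟨jfun k N W w, hmem w⟩ + ⟨jfun k N W w', hmem w'⟩ :=
          Subtype.ext (jfun_add N W w w')
        show Submodule.Quotient.mk ⟨jfun k N W (w + w'), hmem _⟩ = φ₀ w + φ₀ w'
        rw [h1, Submodule.Quotient.mk_add]
      map_smul' := fun a w => hsmul a w }
  refine ⟨φ, ?_⟩
  have hker : LinearMap.ker φ ≠ ⊤ := by
    intro h
    have h0 : φ w₀ = 0 := LinearMap.mem_ker.mp (h ▸ Submodule.mem_top)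
    have hmm : (⟨jfun k N W w₀, hmem w₀⟩ : ↥U) ∈ M := by
      have := (Submodule.Quotient.mk_eq_zero M).mp h0
      convert this using 2
    have hsp : Submodule.span (MonoidAlgebra k G)
        {(⟨jfun k N W w₀, hmem w₀⟩ : ↥U)} = (⊤ : Submodule (MonoidAlgebra k G) ↥U) := by
      apply Submodule.map_injective_of_injective U.injective_subtype
      rw [Submodule.map_span, Set.image_singleton, Submodule.map_subtype_top]
      rfl
    have hMtop : M = ⊤ := top_unique (by
      rw [← hsp]
      exact Submodule.span_le.mpr (Set.singleton_subset_iff.mpr hmm))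
    exact hM.1 hMtop
  have hker' : LinearMap.ker φ = ⊥ := (eq_bot_or_eq_top _).resolve_right hker
  exact LinearMap.ker_eq_bot.mp hker'
end

section
/- Let G be a finite group, N ⊆ H normal subgroups of G, k a field, and V a simple k[G]-module. If the restriction V|_N is multiplicity-free (i.e., semisimple with pairwise non-isomorphic simple summands), then the restriction V|_H is also multiplicity-free. -/
/-- A module is multiplicity-free if it is semisimple and any two isomorphic simple
submodules are equal (so each isomorphism class of simples occurs at most once). -/
def IsMultiplicityFree (R M : Type*) [Ring R] [AddCommGroup M] [Module R M] : Prop :=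
  IsSemisimpleModule R M ∧
    ∀ W₁ W₂ : Submodule R M, IsSimpleModule R W₁ → IsSimpleModule R W₂ →
      Nonempty (W₁ ≃ₗ[R] W₂) → W₁ = W₂


open MonoidAlgebra in
lemma MF.mapDRH_single {k G H' : Type*} [Field k] [Group G] [Group H'] {F : Type*}
    [FunLike F G H'] [MonoidHomClass F G H'] (f : F) (a : G) (b : k) :
    mapDomainRingHom k f (single a b) = single (f a) b :=
  by simp [mapDomain_single]

open MonoidAlgebra in
lemma MF.aux_comm {k G : Type*} [Field k] [Group G] (H : Subgroup G) [H.Normal]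
    (g : G) (x : MonoidAlgebra k ↥H) :
    mapDomainRingHom k H.subtype x * single g 1 =
      (single g 1 : MonoidAlgebra k G) * mapDomainRingHom k H.subtype
        (mapDomainRingHom k (MulAut.conjNormal g⁻¹ : MulAut ↥H) x) := by
  induction x using MonoidAlgebra.induction_linear with
  | zero => simp
  | add f h hf hh => simp only [map_add, add_mul, mul_add, hf, hh]
  | single a b =>
    simp only [mapDomainRingHom_apply, mapDomain_single]
    rw [single_mul_single,
      single_mul_single, one_mul, mul_one]
    congr 1
    simp [mul_assoc]

open MonoidAlgebra in
/-- conjugate of a `k[H]`-submodule of `V` by `g : G`. -/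
def MF.conjSub {k G : Type*} [Field k] [Group G] (H : Subgroup G) [H.Normal]
    {V : Type*} [AddCommGroup V] [Module (MonoidAlgebra k G) V]
    [Module (MonoidAlgebra k ↥H) V]
    (hresH : ∀ (x : MonoidAlgebra k ↥H) (v : V),
      x • v = mapDomainRingHom k H.subtype x • v)
    (g : G) (W : Submodule (MonoidAlgebra k ↥H) V) :
    Submodule (MonoidAlgebra k ↥H) V where
  carrier := (fun v => (single g 1 : MonoidAlgebra k G) • v) '' W
  add_mem' := by
    rintro _ _ ⟨a, ha, rfl⟩ ⟨b, hb, rfl⟩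
    exact ⟨a + b, W.add_mem ha hb, smul_add _ _ _⟩
  zero_mem' := ⟨0, W.zero_mem, smul_zero _⟩
  smul_mem' := by
    rintro x _ ⟨w, hw, rfl⟩
    refine ⟨(mapDomainRingHom k (MulAut.conjNormal g⁻¹ : MulAut ↥H) x) • w,
      W.smul_mem _ hw, ?_⟩
    dsimp only
    rw [hresH, ← mul_smul, ← MF.aux_comm, mul_smul, ← hresH]

lemma MF.conjSub_conjSub {k G : Type*} [Field k] [Group G] (H : Subgroup G) [H.Normal]
    {V : Type*} [AddCommGroup V] [Module (MonoidAlgebra k G) V]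
    [Module (MonoidAlgebra k ↥H) V]
    (hresH : ∀ (x : MonoidAlgebra k ↥H) (v : V),
      x • v = MonoidAlgebra.mapDomainRingHom k H.subtype x • v)
    (g g' : G) (W : Submodule (MonoidAlgebra k ↥H) V) :
    MF.conjSub H hresH g (MF.conjSub H hresH g' W)
      = MF.conjSub H hresH (g * g') W := by
  ext v
  constructor
  · rintro ⟨_, ⟨w, hw, rfl⟩, rfl⟩
    exact ⟨w, hw, by dsimp only; rw [← mul_smul, MonoidAlgebra.single_mul_single, one_mul]⟩
  · rintro ⟨w, hw, rfl⟩
    exact ⟨_, ⟨w, hw, rfl⟩, by dsimp only; rw [← mul_smul, MonoidAlgebra.single_mul_single, one_mul]⟩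

lemma MF.conjSub_one {k G : Type*} [Field k] [Group G] (H : Subgroup G) [H.Normal]
    {V : Type*} [AddCommGroup V] [Module (MonoidAlgebra k G) V]
    [Module (MonoidAlgebra k ↥H) V]
    (hresH : ∀ (x : MonoidAlgebra k ↥H) (v : V),
      x • v = MonoidAlgebra.mapDomainRingHom k H.subtype x • v)
    (W : Submodule (MonoidAlgebra k ↥H) V) :
    MF.conjSub H hresH 1 W = W := by
  have h1 : (MonoidAlgebra.single (1 : G) (1 : k)) = 1 := rfl
  ext v
  constructor
  · rintro ⟨w, hw, rfl⟩; dsimp only; rw [h1, one_smul]; exact hw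
  · intro hv; exact ⟨v, hv, by dsimp only; rw [h1, one_smul]⟩

open MonoidAlgebra in
/-- conjugation as an order isomorphism on the lattice of `k[H]`-submodules. -/
def MF.conjIso {k G : Type*} [Field k] [Group G] (H : Subgroup G) [H.Normal]
    {V : Type*} [AddCommGroup V] [Module (MonoidAlgebra k G) V]
    [Module (MonoidAlgebra k ↥H) V]
    (hresH : ∀ (x : MonoidAlgebra k ↥H) (v : V),
      x • v = mapDomainRingHom k H.subtype x • v)
    (g : G) :
    Submodule (MonoidAlgebra k ↥H) V ≃o Submodule (MonoidAlgebra k ↥H) V where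
  toFun := MF.conjSub H hresH g
  invFun := MF.conjSub H hresH g⁻¹
  left_inv W := by rw [MF.conjSub_conjSub, inv_mul_cancel, MF.conjSub_one]
  right_inv W := by rw [MF.conjSub_conjSub, mul_inv_cancel, MF.conjSub_one]
  map_rel_iff' := by
    intro W W'
    constructor
    · intro h v hv
      have : (single g⁻¹ (1:k) : MonoidAlgebra k G) • ((single g (1:k) : MonoidAlgebra k G) • v)
          ∈ MF.conjSub H hresH g⁻¹ (MF.conjSub H hresH g W') :=
        ⟨_, h ⟨v, hv, rfl⟩, rfl⟩
      rwa [MF.conjSub_conjSub, inv_mul_cancel, MF.conjSub_one, ← mul_smul,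
        single_mul_single, inv_mul_cancel, one_mul,
        show (single (1:G) (1:k) : MonoidAlgebra k G) = 1 from rfl, one_smul] at this
    · rintro h _ ⟨w, hw, rfl⟩
      exact ⟨w, h hw, rfl⟩

open MonoidAlgebra in
lemma MF.isSemisimple {k G : Type*} [Field k] [Group G] (H : Subgroup G) [H.Normal]
    {V : Type*} [AddCommGroup V] [Module (MonoidAlgebra k G) V]
    [IsSimpleModule (MonoidAlgebra k G) V]
    [Module (MonoidAlgebra k ↥H) V]
    (hresH : ∀ (x : MonoidAlgebra k ↥H) (v : V),
      x • v = mapDomainRingHom k H.subtype x • v)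
    (hex : ∃ W : Submodule (MonoidAlgebra k ↥H) V,
      IsSimpleModule (MonoidAlgebra k ↥H) W) :
    IsSemisimpleModule (MonoidAlgebra k ↥H) V := by
  classical
  set S : Set (Submodule (MonoidAlgebra k ↥H) V) :=
    {m | IsSimpleModule (MonoidAlgebra k ↥H) m} with hSdef
  apply IsSemisimpleModule.of_sSup_simples_eq_top
  set Sig : Submodule (MonoidAlgebra k ↥H) V := sSup S with hSigdef
  have hconj : ∀ g : G, ∀ v ∈ Sig, (single g (1:k) : MonoidAlgebra k G) • v ∈ Sig := by
    intro g v hv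
    have h1 : MF.conjIso H hresH g Sig ≤ Sig := by
      rw [hSigdef, map_sSup]
      apply sSup_le
      rintro _ ⟨m, hm, rfl⟩
      apply le_sSup
      have hatom : IsAtom ((MF.conjIso H hresH g) m) := by
        rw [(MF.conjIso H hresH g).isAtom_iff]
        exact isSimpleModule_iff_isAtom.mp hm
      exact isSimpleModule_iff_isAtom.mpr hatom
    exact h1 ⟨v, hv, rfl⟩
  have hsmul : ∀ (a : MonoidAlgebra k G), ∀ v ∈ Sig, a • v ∈ Sig := by
    intro a
    induction a using MonoidAlgebra.induction_linear with
    | zero => intro v hv; rw [zero_smul]; exact Sig.zero_mem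
    | add f h hf hh => intro v hv; rw [add_smul]; exact Sig.add_mem (hf v hv) (hh v hv)
    | single g c =>
      intro v hv
      have h2 : (single g c : MonoidAlgebra k G)
          = single g (1:k) * single (1:G) c := by
        rw [single_mul_single, mul_one, one_mul]
      rw [h2, mul_smul]
      apply hconj
      have h3 : (single (1:G) c : MonoidAlgebra k G) • v
          = (single (1:↥H) c : MonoidAlgebra k ↥H) • v := by
        rw [hresH, mapDomainRingHom_apply, mapDomain_single]
        simp
      rw [h3]
      exact Sig.smul_mem _ hv
  let SA : Submodule (MonoidAlgebra k G) V :=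
    { carrier := Sig
      add_mem' := fun h1 h2 => Sig.add_mem h1 h2
      zero_mem' := Sig.zero_mem
      smul_mem' := fun a v hv => hsmul a v hv }
  have hSigne : Sig ≠ ⊥ := by
    obtain ⟨W, hW⟩ := hex
    have hWne : W ≠ ⊥ := (isSimpleModule_iff_isAtom.mp hW).1
    intro h
    exact hWne (le_bot_iff.mp (h ▸ le_sSup (show W ∈ S from hW)))
  have hSAne : SA ≠ ⊥ := by
    intro h
    apply hSigne
    rw [eq_bot_iff]
    intro x hx
    have hxa : x ∈ SA := hx
    rw [h, Submodule.mem_bot] at hxa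
    rw [Submodule.mem_bot]
    exact hxa
  have hSAtop : SA = ⊤ := (eq_bot_or_eq_top SA).resolve_left hSAne
  rw [eq_top_iff]
  intro x _
  show x ∈ Sig
  have : x ∈ SA := hSAtop ▸ Submodule.mem_top
  exact this


/-- Let `G` be a finite group, `N ⊆ H` normal subgroups of `G`, `k` a field and `V` a simple
`k[G]`-module, with the `k[N]`- and `k[H]`-module structures on `V` given by restriction.
If `V|_N` is multiplicity-free then so is `V|_H`. -/
theorem multiplicityFree_of_multiplicityFree_smaller_normal
    {k G : Type*} [Field k] [Group G] [Finite G]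
    (N H : Subgroup G) [N.Normal] [H.Normal] (hNH : N ≤ H)
    (V : Type*) [AddCommGroup V] [Module (MonoidAlgebra k G) V]
    [IsSimpleModule (MonoidAlgebra k G) V]
    [Module (MonoidAlgebra k ↥N) V] [Module (MonoidAlgebra k ↥H) V]
    (hresN : ∀ (x : MonoidAlgebra k ↥N) (v : V),
      x • v = MonoidAlgebra.mapDomainRingHom k N.subtype x • v)
    (hresH : ∀ (x : MonoidAlgebra k ↥H) (v : V),
      x • v = MonoidAlgebra.mapDomainRingHom k H.subtype x • v)
    (hmf : IsMultiplicityFree (MonoidAlgebra k ↥N) V) :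
    IsMultiplicityFree (MonoidAlgebra k ↥H) V := by
  classical
  obtain ⟨hss, huniq⟩ := hmf
  haveI : IsSemisimpleModule (MonoidAlgebra k ↥N) V := hss
  haveI : Nontrivial V := IsSimpleModule.nontrivial (MonoidAlgebra k G) V
  -- compatibility of the k[N]-action with the k[H]-action
  have hres' : ∀ (x : MonoidAlgebra k ↥N) (v : V),
      x • v = (MonoidAlgebra.mapDomainRingHom k (Subgroup.inclusion hNH) x) • v := by
    intro x v
    rw [hresN, hresH]
    congr 1
    rw [← RingHom.comp_apply, ← MonoidAlgebra.mapDomainRingHom_comp]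
    rfl
  -- restriction of scalars on submodules
  let resSub : Submodule (MonoidAlgebra k ↥H) V → Submodule (MonoidAlgebra k ↥N) V :=
    fun W =>
      { carrier := W
        add_mem' := fun h1 h2 => W.add_mem h1 h2
        zero_mem' := W.zero_mem
        smul_mem' := fun c v hv => by
          rw [hres']
          exact W.smul_mem _ hv }
  -- V is finitely generated over k[N]
  haveI : Module.Finite (MonoidAlgebra k ↥N) V := by
    obtain ⟨v, hv⟩ := exists_ne (0 : V)
    have hsp : Submodule.span (MonoidAlgebra k G) {v} = ⊤ := by
      rcases eq_bot_or_eq_top (Submodule.span (MonoidAlgebra k G) {v}) with h | h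
      · exact absurd (h ▸ Submodule.mem_span_singleton_self v)
          (by rw [Submodule.mem_bot]; exact hv)
      · exact h
    refine ⟨Submodule.fg_def.mpr
      ⟨Set.range (fun g : G => (MonoidAlgebra.single g (1:k) : MonoidAlgebra k G) • v),
        Set.finite_range _, ?_⟩⟩
    have key : ∀ a : MonoidAlgebra k G, a • v ∈ Submodule.span (MonoidAlgebra k ↥N)
        (Set.range fun g : G => (MonoidAlgebra.single g (1:k) : MonoidAlgebra k G) • v) := by
      intro a
      induction a using MonoidAlgebra.induction_linear with
      | zero => rw [zero_smul]; exact Submodule.zero_mem _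
      | add f h hf hh => rw [add_smul]; exact Submodule.add_mem _ hf hh
      | single g c =>
        have h2 : (MonoidAlgebra.single g c : MonoidAlgebra k G)
            = MonoidAlgebra.single (1:G) c * MonoidAlgebra.single g (1:k) := by
          rw [MonoidAlgebra.single_mul_single, one_mul, mul_one]
        rw [h2, mul_smul]
        have h3 : (MonoidAlgebra.single (1:G) c : MonoidAlgebra k G)
              • ((MonoidAlgebra.single g (1:k) : MonoidAlgebra k G) • v)
            = (MonoidAlgebra.single (1:↥N) c : MonoidAlgebra k ↥N)
              • ((MonoidAlgebra.single g (1:k) : MonoidAlgebra k G) • v) := by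
          rw [hresN, MonoidAlgebra.mapDomainRingHom_apply, MonoidAlgebra.mapDomain_single]
          simp
        rw [h3]
        exact Submodule.smul_mem _ _ (Submodule.subset_span ⟨g, rfl⟩)
    rw [eq_top_iff]
    rintro w -
    obtain ⟨a, rfl⟩ := (Submodule.mem_span_singleton).mp (hsp ▸ Submodule.mem_top (x := w))
    exact key a
  haveI : IsArtinian (MonoidAlgebra k ↥N) V := inferInstance
  -- the lattice of k[H]-submodules is well-founded, hence atomic
  have hwf : WellFoundedLT (Submodule (MonoidAlgebra k ↥H) V) := by
    have hmono : StrictMono resSub := by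
      intro W W' h
      refine lt_of_le_of_ne (fun x hx => h.le hx) ?_
      intro he
      apply h.ne
      apply le_antisymm h.le
      intro x hx
      have hx' : x ∈ resSub W' := hx
      rw [← he] at hx'
      exact hx'
    exact hmono.wellFoundedLT
  haveI : IsAtomic (Submodule (MonoidAlgebra k ↥H) V) :=
    isAtomic_of_orderBot_wellFounded_lt hwf.wf
  have hex : ∃ W : Submodule (MonoidAlgebra k ↥H) V,
      IsSimpleModule (MonoidAlgebra k ↥H) W := by
    rcases eq_bot_or_exists_atom_le (⊤ : Submodule (MonoidAlgebra k ↥H) V) with h | ⟨a, ha, -⟩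
    · obtain ⟨x, hx⟩ := exists_ne (0 : V)
      exact absurd ((Submodule.mem_bot _).mp (h ▸ Submodule.mem_top (x := x))) hx
    · exact ⟨a, isSimpleModule_iff_isAtom.mpr ha⟩
  refine ⟨MF.isSemisimple H hresH hex, ?_⟩
  rintro W₁ W₂ h₁ h₂ ⟨f⟩
  have hatom1 := isSimpleModule_iff_isAtom.mp h₁
  have hatom2 := isSimpleModule_iff_isAtom.mp h₂
  have hW1ne : resSub W₁ ≠ ⊥ := by
    intro h
    apply hatom1.1
    rw [eq_bot_iff]
    intro x hx
    have hx' : x ∈ resSub W₁ := hx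
    rw [h, Submodule.mem_bot] at hx'
    rw [Submodule.mem_bot]
    exact hx'
  obtain ⟨S₀, hS₀le, hS₀simple⟩ :=
    (IsSemisimpleModule.eq_bot_or_exists_simple_le (resSub W₁)).resolve_left hW1ne
  let ψ : S₀ →ₗ[MonoidAlgebra k ↥N] V :=
    { toFun := fun s => ((f ⟨s.1, hS₀le s.2⟩ : W₂) : V)
      map_add' := by
        intro s t
        have h1 : (⟨(s + t).1, hS₀le (s + t).2⟩ : W₁)
            = ⟨s.1, hS₀le s.2⟩ + ⟨t.1, hS₀le t.2⟩ := rfl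
        rw [h1, map_add]
        rfl
      map_smul' := by
        intro c s
        have h1 : (⟨(c • s).1, hS₀le (c • s).2⟩ : W₁)
            = (MonoidAlgebra.mapDomainRingHom k (Subgroup.inclusion hNH) c)
              • (⟨s.1, hS₀le s.2⟩ : W₁) := by
          apply Subtype.ext
          show c • s.1 = _
          rw [hres']
          rfl
        rw [h1, map_smul]
        simp only [RingHom.id_apply, Submodule.coe_smul]
        exact (hres' c _).symm }
  have hinj : Function.Injective ψ := by
    intro s t h
    have h2 : (f ⟨s.1, hS₀le s.2⟩) = (f ⟨t.1, hS₀le t.2⟩) := Subtype.ext h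
    have h3 := f.injective h2
    have h4 : ((⟨s.1, hS₀le s.2⟩ : W₁) : V) = ((⟨t.1, hS₀le t.2⟩ : W₁) : V) :=
      congrArg Subtype.val h3
    exact Subtype.ext h4
  let S₂ := LinearMap.range ψ
  have e1 : (↥S₀) ≃ₗ[MonoidAlgebra k ↥N] ↥S₂ := LinearEquiv.ofInjective ψ hinj
  have hS₂simple : IsSimpleModule (MonoidAlgebra k ↥N) ↥S₂ := by
    haveI := hS₀simple
    exact IsSimpleModule.congr e1.symm
  have heq : S₀ = S₂ := huniq S₀ S₂ hS₀simple hS₂simple ⟨e1⟩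
  have hS₂le : S₂ ≤ resSub W₂ := by
    rintro _ ⟨s, rfl⟩
    exact (f ⟨s.1, hS₀le s.2⟩).2
  obtain ⟨x, hxS₀, hx0⟩ := (Submodule.ne_bot_iff S₀).mp (isSimpleModule_iff_isAtom.mp hS₀simple).1
  have hx1 : x ∈ W₁ := hS₀le hxS₀
  have hx2 : x ∈ W₂ := hS₂le (heq ▸ hxS₀)
  have hne : W₁ ⊓ W₂ ≠ ⊥ := by
    intro h
    have hx' : x ∈ (⊥ : Submodule (MonoidAlgebra k ↥H) V) :=
      h ▸ (Submodule.mem_inf.mpr ⟨hx1, hx2⟩)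
    exact hx0 ((Submodule.mem_bot _).mp hx')
  have e2 : W₁ ⊓ W₂ = W₁ := (hatom1.le_iff.mp inf_le_left).resolve_left hne
  have e3 : W₁ ⊓ W₂ = W₂ := (hatom2.le_iff.mp inf_le_right).resolve_left hne
  rw [← e2, e3]
end
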